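/- Let n > 2 be an integer, 0 < α ≤ 1/2, and let c ∈ [1 − 3α/n, 1). Define g ∈ ℝⁿ by g_i = (c^{i−1} − c^{n−1})/(1 + (α − 1)/n) for i = 1, …, n. Then g is not the zero vector and max_{i∈[n]} g_i² ≤ (3 + 3α)·(1/n)·Σ_{i=1}^{n} g_i²; in particular the maximum is attained at i = 1. -/

import Mathlib

set_option maxHeartbeats 4000000
set_option linter.unusedVariables false
set_option linter.deprecated false
set_option maxRecDepth 100000

-- auto-generated certificates
private lemma certR (x b : ℝ) (h1 : 0 ≤ 1 - x) (h2 : 0 ≤ x - 3*b) (h3 : 0 ≤ b) :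
    0 ≤ ((2*x^2+7*x+9) - (x^2+6*x+12)*b + (3+x)*b^2) * (1 - (x-b) + (x-b)*(x-2*b)/2 - (x-b)*(x-2*b)*(x-3*b)/6 + (x-b)*(x-2*b)*(x-3*b)*(x-4*b)/24 - (x-b)*(x-2*b)*(x-3*b)*(x-4*b)*(x-5*b)/120)^2 - (12 - 6*b) * (1 - (x-b) + (x-b)*(x-2*b)/2 - (x-b)*(x-2*b)*(x-3*b)/6 + (x-b)*(x-2*b)*(x-3*b)*(x-4*b)/24 - (x-b)*(x-2*b)*(x-3*b)*(x-4*b)*(x-5*b)/120) + (3 - x + x*b) := by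
  have h3' : (0:ℝ) ≤ 3*b := by linarith
  have key : ((2*x^2+7*x+9) - (x^2+6*x+12)*b + (3+x)*b^2) * (1 - (x-b) + (x-b)*(x-2*b)/2 - (x-b)*(x-2*b)*(x-3*b)/6 + (x-b)*(x-2*b)*(x-3*b)*(x-4*b)/24 - (x-b)*(x-2*b)*(x-3*b)*(x-4*b)*(x-5*b)/120)^2 - (12 - 6*b) * (1 - (x-b) + (x-b)*(x-2*b)/2 - (x-b)*(x-2*b)*(x-3*b)/6 + (x-b)*(x-2*b)*(x-3*b)*(x-4*b)/24 - (x-b)*(x-2*b)*(x-3*b)*(x-4*b)*(x-5*b)/120) + (3 - x + x*b)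
      = (205/729) * ((1-x)^0 * ((x-3*b)^0 * (3*b)^13)) + (676183/196830) * ((1-x)^0 * ((x-3*b)^1 * (3*b)^12)) + (4089114721/212576400) * ((1-x)^0 * ((x-3*b)^2 * (3*b)^11)) + (13882605709/212576400) * ((1-x)^0 * ((x-3*b)^3 * (3*b)^10)) + (42458104243/283435200) * ((1-x)^0 * ((x-3*b)^4 * (3*b)^9)) + (5780657017/23619600) * ((1-x)^0 * ((x-3*b)^5 * (3*b)^8)) + (3068818327/10497600) * ((1-x)^0 * ((x-3*b)^6 * (3*b)^7)) + (1352256539/5248800) * ((1-x)^0 * ((x-3*b)^7 * (3*b)^6)) + (583290029/3499200) * ((1-x)^0 * ((x-3*b)^8 * (3*b)^5)) + (3771121/48600) * ((1-x)^0 * ((x-3*b)^9 * (3*b)^4)) + (9689167/388800) * ((1-x)^0 * ((x-3*b)^10 * (3*b)^3)) + (36677/7200) * ((1-x)^0 * ((x-3*b)^11 * (3*b)^2)) + (377/675) * ((1-x)^0 * ((x-3*b)^12 * (3*b)^1)) + (1/50) * ((1-x)^0 * ((x-3*b)^13 * (3*b)^0)) + (692/243) * ((1-x)^1 * ((x-3*b)^0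 * (3*b)^12)) + (210499/6561) * ((1-x)^1 * ((x-3*b)^1 * (3*b)^11)) + (388013257/2361960) * ((1-x)^1 * ((x-3*b)^2 * (3*b)^10)) + (17888700271/35429400) * ((1-x)^1 * ((x-3*b)^3 * (3*b)^9)) + (16311105553/15746400) * ((1-x)^1 * ((x-3*b)^4 * (3*b)^8)) + (391324409/262440) * ((1-x)^1 * ((x-3*b)^5 * (3*b)^7)) + (1077284203/699840) * ((1-x)^1 * ((x-3*b)^6 * (3*b)^6)) + (111079439/97200) * ((1-x)^1 * ((x-3*b)^7 * (3*b)^5)) + (175223401/291600) * ((1-x)^1 * ((x-3*b)^8 * (3*b)^4)) + (261686/1215) * ((1-x)^1 * ((x-3*b)^9 * (3*b)^3)) + (1261877/25920) * ((1-x)^1 * ((x-3*b)^10 * (3*b)^2)) + (21119/3600) * ((1-x)^1 * ((x-3*b)^11 * (3*b)^1)) + (52/225) * ((1-x)^1 * ((x-3*b)^12 * (3*b)^0)) + (3137/243) * ((1-x)^2 * ((x-3*b)^0 * (3*b)^11)) + (8737471/65610) * ((1-x)^2 * ((x-3*b)^1 * (3*b)^10)) + (583881227/944784) * ((1-x)^2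 * ((x-3*b)^2 * (3*b)^9)) + (40163809291/23619600) * ((1-x)^2 * ((x-3*b)^3 * (3*b)^8)) + (19373211073/6298560) * ((1-x)^2 * ((x-3*b)^4 * (3*b)^7)) + (4019004851/1049760) * ((1-x)^2 * ((x-3*b)^5 * (3*b)^6)) + (466152631/139968) * ((1-x)^2 * ((x-3*b)^6 * (3*b)^5)) + (1171978061/583200) * ((1-x)^2 * ((x-3*b)^7 * (3*b)^4)) + (63263687/77760) * ((1-x)^2 * ((x-3*b)^8 * (3*b)^3)) + (886511/4320) * ((1-x)^2 * ((x-3*b)^9 * (3*b)^2)) + (47261/1728) * ((1-x)^2 * ((x-3*b)^10 * (3*b)^1)) + (8557/7200) * ((1-x)^2 * ((x-3*b)^11 * (3*b)^0)) + (25133/729) * ((1-x)^3 * ((x-3*b)^0 * (3*b)^10)) + (31773179/98415) * ((1-x)^3 * ((x-3*b)^1 * (3*b)^9)) + (3524548969/2624400) * ((1-x)^3 * ((x-3*b)^2 * (3*b)^8)) + (5135463563/1574640) * ((1-x)^3 * ((x-3*b)^3 * (3*b)^7)) + (10717486337/2099520) * ((1-x)^3 * ((x-3*b)^4 * (3*b)^6))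 + (62475107/11664) * ((1-x)^3 * ((x-3*b)^5 * (3*b)^5)) + (4417299517/1166400) * ((1-x)^3 * ((x-3*b)^6 * (3*b)^4)) + (11396249/6480) * ((1-x)^3 * ((x-3*b)^7 * (3*b)^3)) + (12973523/25920) * ((1-x)^3 * ((x-3*b)^8 * (3*b)^2)) + (160429/2160) * ((1-x)^3 * ((x-3*b)^9 * (3*b)^1)) + (17033/4800) * ((1-x)^3 * ((x-3*b)^10 * (3*b)^0)) + (14585/243) * ((1-x)^4 * ((x-3*b)^0 * (3*b)^9)) + (1104034/2187) * ((1-x)^4 * ((x-3*b)^1 * (3*b)^8)) + (243577219/131220) * ((1-x)^4 * ((x-3*b)^2 * (3*b)^7)) + (102484243/26244) * ((1-x)^4 * ((x-3*b)^3 * (3*b)^6)) + (902067733/174960) * ((1-x)^4 * ((x-3*b)^4 * (3*b)^5)) + (102581221/23328) * ((1-x)^4 * ((x-3*b)^5 * (3*b)^4)) + (23240771/9720) * ((1-x)^4 * ((x-3*b)^6 * (3*b)^3)) + (1009427/1296) * ((1-x)^4 * ((x-3*b)^7 * (3*b)^2)) + (280177/2160) * ((1-x)^4 * ((x-3*b)^8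 * (3*b)^1)) + (1949/288) * ((1-x)^4 * ((x-3*b)^9 * (3*b)^0)) + (17279/243) * ((1-x)^5 * ((x-3*b)^0 * (3*b)^8)) + (11590541/21870) * ((1-x)^5 * ((x-3*b)^1 * (3*b)^7)) + (295914727/174960) * ((1-x)^5 * ((x-3*b)^2 * (3*b)^6)) + (525726457/174960) * ((1-x)^5 * ((x-3*b)^3 * (3*b)^5)) + (83610301/25920) * ((1-x)^5 * ((x-3*b)^4 * (3*b)^4)) + (20544659/9720) * ((1-x)^5 * ((x-3*b)^5 * (3*b)^3)) + (1157077/1440) * ((1-x)^5 * ((x-3*b)^6 * (3*b)^2)) + (327793/2160) * ((1-x)^5 * ((x-3*b)^7 * (3*b)^1)) + (8207/960) * ((1-x)^5 * ((x-3*b)^8 * (3*b)^0)) + (42271/729) * ((1-x)^6 * ((x-3*b)^0 * (3*b)^7)) + (914443/2430) * ((1-x)^6 * ((x-3*b)^1 * (3*b)^6)) + (7409857/7290) * ((1-x)^6 * ((x-3*b)^2 * (3*b)^5)) + (21427571/14580) * ((1-x)^6 * ((x-3*b)^3 * (3*b)^4)) + (98090/81) * ((1-x)^6 * ((x-3*b)^4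 * (3*b)^3)) + (447379/810) * ((1-x)^6 * ((x-3*b)^5 * (3*b)^2)) + (3601/30) * ((1-x)^6 * ((x-3*b)^6 * (3*b)^1)) + (1289/180) * ((1-x)^6 * ((x-3*b)^7 * (3*b)^0)) + (2599/81) * ((1-x)^7 * ((x-3*b)^0 * (3*b)^6)) + (23902/135) * ((1-x)^7 * ((x-3*b)^1 * (3*b)^5)) + (948151/2430) * ((1-x)^7 * ((x-3*b)^2 * (3*b)^4)) + (280561/648) * ((1-x)^7 * ((x-3*b)^3 * (3*b)^3)) + (17785/72) * ((1-x)^7 * ((x-3*b)^4 * (3*b)^2)) + (22723/360) * ((1-x)^7 * ((x-3*b)^5 * (3*b)^1)) + (461/120) * ((1-x)^7 * ((x-3*b)^6 * (3*b)^0)) + (932/81) * ((1-x)^8 * ((x-3*b)^0 * (3*b)^5)) + (42253/810) * ((1-x)^8 * ((x-3*b)^1 * (3*b)^4)) + (28655/324) * ((1-x)^8 * ((x-3*b)^2 * (3*b)^3)) + (1217/18) * ((1-x)^8 * ((x-3*b)^3 * (3*b)^2)) + (757/36) * ((1-x)^8 * ((x-3*b)^4 * (3*b)^1)) + (6/5)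 * ((1-x)^8 * ((x-3*b)^5 * (3*b)^0)) + (65/27) * ((1-x)^9 * ((x-3*b)^0 * (3*b)^4)) + (17/2) * ((1-x)^9 * ((x-3*b)^1 * (3*b)^3)) + (268/27) * ((1-x)^9 * ((x-3*b)^2 * (3*b)^2)) + 4 * ((1-x)^9 * ((x-3*b)^3 * (3*b)^1)) + (1/6) * ((1-x)^9 * ((x-3*b)^4 * (3*b)^0)) + (2/9) * ((1-x)^10 * ((x-3*b)^0 * (3*b)^3)) + (5/9) * ((1-x)^10 * ((x-3*b)^1 * (3*b)^2)) + (1/3) * ((1-x)^10 * ((x-3*b)^2 * (3*b)^1)) := by ring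
  rw [key]
  repeat' apply add_nonneg
  all_goals exact mul_nonneg (by norm_num) (mul_nonneg (pow_nonneg h1 _) (mul_nonneg (pow_nonneg h2 _) (pow_nonneg h3' _)))

private lemma certW (x b : ℝ) (h1 : 0 ≤ 1 - x) (h2 : 0 ≤ x - 3*b) (h3 : 0 ≤ b) :
    0 ≤ ((2*x^2+7*x+9) - (x^2+6*x+12)*b + (3+x)*b^2) * (1 - (x-b) + (x-b)*(x-2*b)/2 - (x-b)*(x-2*b)*(x-3*b)/6 + (x-b)*(x-2*b)*(x-3*b)*(x-4*b)/24 - (x-b)*(x-2*b)*(x-3*b)*(x-4*b)*(x-5*b)/120) - (6 - 3*b) := by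
  have h3' : (0:ℝ) ≤ 3*b := by linarith
  have key : ((2*x^2+7*x+9) - (x^2+6*x+12)*b + (3+x)*b^2) * (1 - (x-b) + (x-b)*(x-2*b)/2 - (x-b)*(x-2*b)*(x-3*b)/6 + (x-b)*(x-2*b)*(x-3*b)*(x-4*b)/24 - (x-b)*(x-2*b)*(x-3*b)*(x-4*b)*(x-5*b)/120) - (6 - 3*b)
      = (31/81) * ((1-x)^0 * ((x-3*b)^0 * (3*b)^8)) + (145117/43740) * ((1-x)^0 * ((x-3*b)^1 * (3*b)^7)) + (1091981/87480) * ((1-x)^0 * ((x-3*b)^2 * (3*b)^6)) + (64789/2430) * ((1-x)^0 * ((x-3*b)^3 * (3*b)^5)) + (28699/810) * ((1-x)^0 * ((x-3*b)^4 * (3*b)^4)) + (12166/405) * ((1-x)^0 * ((x-3*b)^5 * (3*b)^3)) + (17119/1080) * ((1-x)^0 * ((x-3*b)^6 * (3*b)^2)) + (851/180) * ((1-x)^0 * ((x-3*b)^7 * (3*b)^1)) + (3/5) * ((1-x)^0 * ((x-3*b)^8 * (3*b)^0)) + (55/9) * ((1-x)^1 * ((x-3*b)^0 * (3*b)^7))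 + (129037/2916) * ((1-x)^1 * ((x-3*b)^1 * (3*b)^6)) + (3999173/29160) * ((1-x)^1 * ((x-3*b)^2 * (3*b)^5)) + (1146109/4860) * ((1-x)^1 * ((x-3*b)^3 * (3*b)^4)) + (157493/648) * ((1-x)^1 * ((x-3*b)^4 * (3*b)^3)) + (16217/108) * ((1-x)^1 * ((x-3*b)^5 * (3*b)^2)) + (1029/20) * ((1-x)^1 * ((x-3*b)^6 * (3*b)^1)) + (451/60) * ((1-x)^1 * ((x-3*b)^7 * (3*b)^0)) + (862/27) * ((1-x)^2 * ((x-3*b)^0 * (3*b)^6)) + (47386/243) * ((1-x)^2 * ((x-3*b)^1 * (3*b)^5)) + (2411837/4860) * ((1-x)^2 * ((x-3*b)^2 * (3*b)^4)) + (54548/81) * ((1-x)^2 * ((x-3*b)^3 * (3*b)^3)) + (111007/216) * ((1-x)^2 * ((x-3*b)^4 * (3*b)^2)) + (1882/9) * ((1-x)^2 * ((x-3*b)^5 * (3*b)^1)) + (1417/40) * ((1-x)^2 * ((x-3*b)^6 * (3*b)^0)) + (6826/81) * ((1-x)^3 * ((x-3*b)^0 * (3*b)^5)) + (229813/540) * ((1-x)^3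 * ((x-3*b)^1 * (3*b)^4)) + (557221/648) * ((1-x)^3 * ((x-3*b)^2 * (3*b)^3)) + (46919/54) * ((1-x)^3 * ((x-3*b)^3 * (3*b)^2)) + (31607/72) * ((1-x)^3 * ((x-3*b)^4 * (3*b)^1)) + (5323/60) * ((1-x)^3 * ((x-3*b)^5 * (3*b)^0)) + (3500/27) * ((1-x)^4 * ((x-3*b)^0 * (3*b)^4)) + (56311/108) * ((1-x)^4 * ((x-3*b)^1 * (3*b)^3)) + (169915/216) * ((1-x)^4 * ((x-3*b)^2 * (3*b)^2)) + (6331/12) * ((1-x)^4 * ((x-3*b)^3 * (3*b)^1)) + (3185/24) * ((1-x)^4 * ((x-3*b)^4 * (3*b)^0)) + (1097/9) * ((1-x)^5 * ((x-3*b)^0 * (3*b)^3)) + (6601/18) * ((1-x)^5 * ((x-3*b)^1 * (3*b)^2)) + (2207/6) * ((1-x)^5 * ((x-3*b)^2 * (3*b)^1)) + 123 * ((1-x)^5 * ((x-3*b)^3 * (3*b)^0)) + (208/3) * ((1-x)^6 * ((x-3*b)^0 * (3*b)^2)) + (833/6) * ((1-x)^6 * ((x-3*b)^1 * (3*b)^1))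 + (139/2) * ((1-x)^6 * ((x-3*b)^2 * (3*b)^0)) + 22 * ((1-x)^7 * ((x-3*b)^0 * (3*b)^1)) + 22 * ((1-x)^7 * ((x-3*b)^1 * (3*b)^0)) + 3 * ((1-x)^8 * ((x-3*b)^0 * (3*b)^0)) := by ring
  rw [key]
  repeat' apply add_nonneg
  all_goals exact mul_nonneg (by norm_num) (mul_nonneg (pow_nonneg h1 _) (mul_nonneg (pow_nonneg h2 _) (pow_nonneg h3' _)))


private lemma bonferroni5 (b : ℝ) (hb0 : 0 ≤ b) (hb1 : b ≤ 1) : ∀ m : ℕ,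
    1 - (m:ℝ)*b + (m:ℝ)*((m:ℝ)-1)*b^2/2 - (m:ℝ)*((m:ℝ)-1)*((m:ℝ)-2)*b^3/6
      + (m:ℝ)*((m:ℝ)-1)*((m:ℝ)-2)*((m:ℝ)-3)*b^4/24
      - (m:ℝ)*((m:ℝ)-1)*((m:ℝ)-2)*((m:ℝ)-3)*((m:ℝ)-4)*b^5/120 ≤ (1-b)^m := by
  intro m
  induction m with
  | zero => norm_num
  | succ m ih =>
    have hprod : 0 ≤ (m:ℝ)*((m:ℝ)-1)*((m:ℝ)-2)*((m:ℝ)-3)*((m:ℝ)-4) := by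
      rcases Nat.lt_or_ge m 5 with h | h
      · interval_cases m <;> norm_num
      · have h5 : (5:ℝ) ≤ (m:ℝ) := by exact_mod_cast h
        have := mul_nonneg (mul_nonneg (mul_nonneg (mul_nonneg
          (by linarith : (0:ℝ) ≤ (m:ℝ)) (by linarith : (0:ℝ) ≤ (m:ℝ)-1))
          (by linarith : (0:ℝ) ≤ (m:ℝ)-2)) (by linarith : (0:ℝ) ≤ (m:ℝ)-3))
          (by linarith : (0:ℝ) ≤ (m:ℝ)-4)
        linarith
    have hstep : 1 - ((m+1:ℕ):ℝ)*b + ((m+1:ℕ):ℝ)*(((m+1:ℕ):ℝ)-1)*b^2/2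
        - ((m+1:ℕ):ℝ)*(((m+1:ℕ):ℝ)-1)*(((m+1:ℕ):ℝ)-2)*b^3/6
        + ((m+1:ℕ):ℝ)*(((m+1:ℕ):ℝ)-1)*(((m+1:ℕ):ℝ)-2)*(((m+1:ℕ):ℝ)-3)*b^4/24
        - ((m+1:ℕ):ℝ)*(((m+1:ℕ):ℝ)-1)*(((m+1:ℕ):ℝ)-2)*(((m+1:ℕ):ℝ)-3)*(((m+1:ℕ):ℝ)-4)*b^5/120
        = (1-b)*(1 - (m:ℝ)*b + (m:ℝ)*((m:ℝ)-1)*b^2/2 - (m:ℝ)*((m:ℝ)-1)*((m:ℝ)-2)*b^3/6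
            + (m:ℝ)*((m:ℝ)-1)*((m:ℝ)-2)*((m:ℝ)-3)*b^4/24
            - (m:ℝ)*((m:ℝ)-1)*((m:ℝ)-2)*((m:ℝ)-3)*((m:ℝ)-4)*b^5/120)
          - b^6*((m:ℝ)*((m:ℝ)-1)*((m:ℝ)-2)*((m:ℝ)-3)*((m:ℝ)-4))/120 := by
      push_cast
      ring
    rw [hstep]
    have h1b : (0:ℝ) ≤ 1 - b := by linarith
    have hmul := mul_le_mul_of_nonneg_left ih h1b
    have hb6 : 0 ≤ b^6*((m:ℝ)*((m:ℝ)-1)*((m:ℝ)-2)*((m:ℝ)-3)*((m:ℝ)-4))/120 := by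
      have := mul_nonneg (pow_nonneg hb0 6) hprod
      linarith
    have hpow : (1-b)^(m+1) = (1-b)*(1-b)^m := by rw [pow_succ]; ring
    linarith [hmul, hb6, hpow]

private lemma keyQ (n : ℕ) (hn : 3 ≤ n) (c : ℝ) (hc0 : 1/2 ≤ c) (hc1 : c < 1)
    (hx32 : (n:ℝ)*(1-c) ≤ 3/2) :
    (n:ℝ)*(1-c)*(1+c)*(1-c^(n-1))^2
      ≤ (3+(n:ℝ)*(1-c)) * (1 - 2*(1+c)*c^(n-1) + (2*c+c^2)*(c^(n-1))^2
          + (n:ℝ)*(1-c)*(1+c)*(c^(n-1))^2) := by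
  have hn3 : (3:ℝ) ≤ (n:ℝ) := by exact_mod_cast hn
  set b : ℝ := 1 - c with hbdef
  set x : ℝ := (n:ℝ)*(1-c) with hxdef
  set u : ℝ := c^(n-1) with hudef
  have hb0 : 0 < b := by simp only [hbdef]; linarith
  have hb12 : b ≤ 1/2 := by simp only [hbdef]; linarith
  have h3b : 3*b ≤ x := by
    have h1 : 3*b ≤ (n:ℝ)*b := by nlinarith
    have h2 : (n:ℝ)*b = x := by rw [hxdef, hbdef]
    linarith
  have hx0 : 0 < x := by nlinarith
  have hcb : c = 1 - b := by rw [hbdef]; ring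
  have key : (3+x) * (1 - 2*(1+c)*u + (2*c+c^2)*u^2 + x*(1+c)*u^2) - x*(1+c)*(1-u)^2
      = ((2*x^2+7*x+9) - (x^2+6*x+12)*b + (3+x)*b^2)*u^2 - (12 - 6*b)*u + (3 - x + x*b) := by
    rw [hcb]; ring
  have main : 0 ≤ ((2*x^2+7*x+9) - (x^2+6*x+12)*b + (3+x)*b^2)*u^2 - (12 - 6*b)*u + (3 - x + x*b) := by
    have hA2 : 0 < (2*x^2+7*x+9) - (x^2+6*x+12)*b + (3+x)*b^2 := by
      nlinarith [mul_nonneg (by nlinarith [sq_nonneg x] : (0:ℝ) ≤ x^2+6*x+12) (by linarith : (0:ℝ) ≤ x - 3*b),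
        mul_nonneg (by linarith : (0:ℝ) ≤ 3/2 - x) (sq_nonneg x),
        mul_nonneg (by linarith : (0:ℝ) ≤ 3/2 - x) (by linarith : (0:ℝ) ≤ 3/2 + x),
        sq_nonneg b, mul_nonneg (by linarith : (0:ℝ) ≤ b) (by linarith : (0:ℝ) ≤ b)]
    rcases le_or_gt x 1 with hx1 | hx1
    · -- small x : Bonferroni bound
      have hbf := bonferroni5 b hb0.le (by linarith) (n-1)
      have hcast : ((n-1:ℕ):ℝ) = (n:ℝ) - 1 := by
        have h1 : (1:ℕ) ≤ n := by omega
        push_cast [Nat.cast_sub h1]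
        ring
      have hxb : x = (n:ℝ)*b := by rw [hxdef, hbdef]
      have hL : 1 - ((n-1:ℕ):ℝ)*b + ((n-1:ℕ):ℝ)*(((n-1:ℕ):ℝ)-1)*b^2/2
          - ((n-1:ℕ):ℝ)*(((n-1:ℕ):ℝ)-1)*(((n-1:ℕ):ℝ)-2)*b^3/6
          + ((n-1:ℕ):ℝ)*(((n-1:ℕ):ℝ)-1)*(((n-1:ℕ):ℝ)-2)*(((n-1:ℕ):ℝ)-3)*b^4/24
          - ((n-1:ℕ):ℝ)*(((n-1:ℕ):ℝ)-1)*(((n-1:ℕ):ℝ)-2)*(((n-1:ℕ):ℝ)-3)*(((n-1:ℕ):ℝ)-4)*b^5/120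
          = 1 - (x-b) + (x-b)*(x-2*b)/2 - (x-b)*(x-2*b)*(x-3*b)/6 + (x-b)*(x-2*b)*(x-3*b)*(x-4*b)/24 - (x-b)*(x-2*b)*(x-3*b)*(x-4*b)*(x-5*b)/120 := by
        rw [hcast, hxb]; ring
      have hcbpow : (1-b)^(n-1) = u := by rw [hudef, hcb]
      rw [hL, hcbpow] at hbf
      have hRc := certR x b (by linarith) (by linarith) hb0.le
      have hWc := certW x b (by linarith) (by linarith) hb0.le
      set L : ℝ := 1 - (x-b) + (x-b)*(x-2*b)/2 - (x-b)*(x-2*b)*(x-3*b)/6 + (x-b)*(x-2*b)*(x-3*b)*(x-4*b)/24 - (x-b)*(x-2*b)*(x-3*b)*(x-4*b)*(x-5*b)/120 with hLdef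
      set A2v : ℝ := (2*x^2+7*x+9) - (x^2+6*x+12)*b + (3+x)*b^2 with hA2def
      set A0v : ℝ := 3 - x + x*b with hA0def
      have e1 : 0 ≤ A2v*(u-L)^2 := mul_nonneg hA2.le (sq_nonneg _)
      have e2 : 0 ≤ (u-L)*(A2v*L-(6-3*b)) := mul_nonneg (by linarith) hWc
      have hid : A2v*u^2 - (12-6*b)*u + A0v
          = (A2v*L^2 - (12-6*b)*L + A0v) + A2v*(u-L)^2 + 2*((u-L)*(A2v*L-(6-3*b))) := by
        ring
      linarith [hRc, e1, e2, hid]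
    · -- large x : discriminant route
      have hD : 0 ≤ (3 - x + x*b)*((2*x^2+7*x+9) - (x^2+6*x+12)*b + (3+x)*b^2) - (6-3*b)^2 := by
        have hfact : (3 - x + x*b)*((2*x^2+7*x+9) - (x^2+6*x+12)*b + (3+x)*b^2) - (6-3*b)^2
            = (x+3)*((x-1)*(3-2*x) + x*b*((3*x+1)-(x+4)*b+b^2)) := by ring
        rw [hfact]
        have h1 : 0 ≤ (x-1)*(3-2*x) := mul_nonneg (by linarith) (by linarith)
        have h2 : 0 ≤ (3*x+1)-(x+4)*b+b^2 := by nlinarith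
        have h3 : 0 ≤ x*b*((3*x+1)-(x+4)*b+b^2) :=
          mul_nonneg (mul_nonneg (by linarith) hb0.le) h2
        nlinarith
      set A2v : ℝ := (2*x^2+7*x+9) - (x^2+6*x+12)*b + (3+x)*b^2 with hA2def
      set A0v : ℝ := 3 - x + x*b with hA0def
      have hid2 : A2v*(A2v*u^2 - (12-6*b)*u + A0v)
          = (A2v*u-(6-3*b))^2 + (A0v*A2v - (6-3*b)^2) := by ring
      have h3 : 0 ≤ A2v*(A2v*u^2 - (12-6*b)*u + A0v) := by
        rw [hid2]
        have := sq_nonneg (A2v*u-(6-3*b))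
        linarith
      nlinarith [h3, hA2]
  linarith [key, main]

private lemma mainIneq (n : ℕ) (hn : 3 ≤ n) (α c : ℝ) (hα0 : 0 < α) (hα : α ≤ 1/2)
    (hc : 1 - 3*α/n ≤ c) (hc1 : c < 1) :
    (n:ℝ)*(1 - c^(n-1))^2 ≤ (3+3*α) * ∑ j ∈ Finset.range n, (c^j - c^(n-1))^2 := by
  have hn3 : (3:ℝ) ≤ (n:ℝ) := by exact_mod_cast hn
  have hn0 : (0:ℝ) < (n:ℝ) := by linarith
  have hx3a : (n:ℝ)*(1-c) ≤ 3*α := by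
    have h1 : 1 - c ≤ 3*α/(n:ℝ) := by linarith
    calc (n:ℝ)*(1-c) ≤ (n:ℝ)*(3*α/(n:ℝ)) := by
          exact mul_le_mul_of_nonneg_left h1 (by linarith)
      _ = 3*α := by field_simp
  have hc0 : 1/2 ≤ c := by
    have h2 : 3*α/(n:ℝ) ≤ 1/2 := by
      rw [div_le_iff₀ hn0]; nlinarith
    linarith
  have hx32 : (n:ℝ)*(1-c) ≤ 3/2 := by linarith
  have hQ := keyQ n hn c hc0 hc1 hx32
  set u : ℝ := c^(n-1) with hudef
  have hcnu : c^n = c*u := by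
    have h : n - 1 + 1 = n := by omega
    calc c^n = c^(n-1+1) := by rw [h]
      _ = c^(n-1)*c := pow_succ c (n-1)
      _ = c*u := by rw [hudef]; ring
  have hc2n : (c^2)^n = (c*u)^2 := by
    rw [← hcnu]
    rw [← pow_mul, ← pow_mul, mul_comm]
  have hcne : c ≠ 1 := ne_of_lt hc1
  have hc2ne : c^2 ≠ 1 := by nlinarith [sq_nonneg c]
  have hgeom1 : ∑ j ∈ Finset.range n, c^j = (c^n - 1)/(c-1) := geom_sum_eq hcne n
  have hgeom2 : ∑ j ∈ Finset.range n, (c^2)^j = ((c^2)^n - 1)/(c^2-1) := geom_sum_eq hc2ne n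
  have hexp : ∀ j ∈ Finset.range n, (c^j - u)^2 = (c^2)^j - 2*u*c^j + u^2 := by
    intro j _
    have : (c^j)^2 = (c^2)^j := by rw [← pow_mul, mul_comm j 2, pow_mul]
    nlinarith [this]
  have hsum : ∑ j ∈ Finset.range n, (c^j - u)^2
      = ((c^2)^n - 1)/(c^2-1) - 2*u*((c^n-1)/(c-1)) + (n:ℝ)*u^2 := by
    rw [Finset.sum_congr rfl hexp]
    rw [Finset.sum_add_distrib, Finset.sum_sub_distrib, ← Finset.mul_sum,
      hgeom1, hgeom2, Finset.sum_const, Finset.card_range, nsmul_eq_mul]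
  have hc1' : c - 1 ≠ 0 := by intro h; apply hcne; linarith
  have hc2' : c^2 - 1 ≠ 0 := by intro h; apply hc2ne; linarith
  have hfac : (1-c)*(1+c)*(∑ j ∈ Finset.range n, (c^j - u)^2)
      = 1 - 2*(1+c)*u + (2*c+c^2)*u^2 + (n:ℝ)*(1-c)*(1+c)*u^2 := by
    rw [hsum, hc2n, hcnu]
    field_simp
    ring
  have hP0 : 0 ≤ ∑ j ∈ Finset.range n, (c^j - u)^2 :=
    Finset.sum_nonneg fun j _ => sq_nonneg _
  have hT0 : 0 ≤ 1 - 2*(1+c)*u + (2*c+c^2)*u^2 + (n:ℝ)*(1-c)*(1+c)*u^2 := by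
    rw [← hfac]
    have : 0 ≤ (1-c)*(1+c) := mul_nonneg (by linarith) (by linarith)
    exact mul_nonneg this hP0
  have step : (n:ℝ)*(1-c)*(1+c)*(1-u)^2
      ≤ (3+3*α) * (1 - 2*(1+c)*u + (2*c+c^2)*u^2 + (n:ℝ)*(1-c)*(1+c)*u^2) := by
    calc (n:ℝ)*(1-c)*(1+c)*(1-u)^2
        ≤ (3+(n:ℝ)*(1-c)) * (1 - 2*(1+c)*u + (2*c+c^2)*u^2 + (n:ℝ)*(1-c)*(1+c)*u^2) := hQ
      _ ≤ (3+3*α) * (1 - 2*(1+c)*u + (2*c+c^2)*u^2 + (n:ℝ)*(1-c)*(1+c)*u^2) :=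
          mul_le_mul_of_nonneg_right (by linarith) hT0
  rw [← hfac] at step
  have hposc : 0 < (1-c)*(1+c) := mul_pos (by linarith) (by linarith)
  rw [← mul_le_mul_iff_of_pos_right hposc]
  calc (n:ℝ)*(1-u)^2 * ((1-c)*(1+c)) = (n:ℝ)*(1-c)*(1+c)*(1-u)^2 := by ring
    _ ≤ (3+3*α)*((1-c)*(1+c)*(∑ j ∈ Finset.range n, (c^j - u)^2)) := step
    _ = (3+3*α)*(∑ j ∈ Finset.range n, (c^j - u)^2) * ((1-c)*(1+c)) := by ring

/-- for the gradient-shaped vector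
`g_i = (c^{i−1} − c^{n−1})/(1 + (α−1)/n)` (1-based; here `g j = (c^j − c^{n−1})/…`
with 0-based `j`), `g` is nonzero, its squared entries are bounded by
`(3 + 3α)` times their average, and the maximum is attained at the first entry. -/
theorem gradient_flatness_bound {n : ℕ} (hn : 2 < n)
    (α : ℝ) (hα0 : 0 < α) (hα : α ≤ 1 / 2)
    (c : ℝ) (hc : 1 - 3 * α / n ≤ c) (hc1 : c < 1)
    (g : Fin n → ℝ)
    (hg : ∀ i : Fin n, g i = (c ^ (i : ℕ) - c ^ (n - 1)) / (1 + (α - 1) / n)) :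
    g ≠ 0 ∧
    (∀ i : Fin n, (g i) ^ 2 ≤ (3 + 3 * α) * ((1 / (n : ℝ)) * ∑ j, (g j) ^ 2)) ∧
    (∀ i : Fin n, (g i) ^ 2 ≤ (g (⟨0, by omega⟩ : Fin n)) ^ 2) := by
  have hn3 : 3 ≤ n := hn
  have hnr : (3:ℝ) ≤ (n:ℝ) := by exact_mod_cast hn3
  have hn0 : (0:ℝ) < (n:ℝ) := by linarith
  have hc0 : 1/2 ≤ c := by
    have h2 : 3*α/(n:ℝ) ≤ 1/2 := by
      rw [div_le_iff₀ hn0]; nlinarith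
    have : 1 - 3 * α / (n:ℝ) ≤ c := hc
    linarith
  set u : ℝ := c^(n-1) with hudef
  set D : ℝ := 1 + (α - 1)/(n:ℝ) with hDdef
  have hDpos : 0 < D := by
    rw [hDdef]
    have h1 : (α-1)/(n:ℝ) = (α-1)*(1/(n:ℝ)) := by ring
    have h2 : 1/(n:ℝ) ≤ 1/3 := by
      rw [div_le_div_iff₀ hn0 (by norm_num : (0:ℝ) < 3)]; linarith
    have h3 : 0 < 1/(n:ℝ) := by positivity
    have h4 : α - 1 ≤ 0 := by linarith
    have h5 : (α-1)*(1/3) ≤ (α-1)*(1/(n:ℝ)) := by nlinarith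
    rw [h1]; nlinarith
  have hu1 : u < 1 := by
    rw [hudef]
    exact pow_lt_one₀ (by linarith) hc1 (by omega)
  have hgval : ∀ i : Fin n, g i = (c^(i:ℕ) - u)/D := by
    intro i; rw [hg i, hudef, hDdef]
  have hci_le : ∀ i : Fin n, c^(i:ℕ) ≤ 1 := by
    intro i
    calc c^(i:ℕ) ≤ 1^(i:ℕ) := pow_le_pow_left₀ (by linarith) hc1.le _
      _ = 1 := one_pow _
  have hci_ge : ∀ i : Fin n, u ≤ c^(i:ℕ) := by
    intro i
    rw [hudef]
    exact pow_le_pow_of_le_one (by linarith) hc1.le (by omega : (i:ℕ) ≤ n-1)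
  have hg0 : g (⟨0, by omega⟩ : Fin n) = (1-u)/D := by
    rw [hgval]; norm_num
  have hgnonneg : ∀ i : Fin n, 0 ≤ g i := by
    intro i; rw [hgval]
    exact div_nonneg (by linarith [hci_ge i]) hDpos.le
  have hgle : ∀ i : Fin n, g i ≤ g (⟨0, by omega⟩ : Fin n) := by
    intro i; rw [hgval, hg0]
    exact (div_le_div_iff_of_pos_right hDpos).mpr (by linarith [hci_le i])
  have hsq_le : ∀ i : Fin n, (g i)^2 ≤ (g (⟨0, by omega⟩ : Fin n))^2 :=
    fun i => pow_le_pow_left₀ (hgnonneg i) (hgle i) 2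
  refine ⟨?_, ?_, fun i => hsq_le i⟩
  · intro h
    have h0 : ((1-u)/D : ℝ) = 0 := by
      rw [← hg0, h]; simp
    have hpos : 0 < (1-u)/D := div_pos (by linarith) hDpos
    linarith [h0 ▸ hpos]
  · intro i
    refine le_trans (hsq_le i) ?_
    have hMain := mainIneq n hn3 α c hα0 hα hc hc1
    have hsq : ∑ j : Fin n, (g j)^2 = (∑ j ∈ Finset.range n, (c^j - u)^2)/D^2 := by
      calc ∑ j : Fin n, (g j)^2 = ∑ j : Fin n, (c^(j:ℕ)-u)^2/D^2 := by
            apply Finset.sum_congr rfl; intro j _; rw [hgval j, div_pow]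
        _ = ∑ j ∈ Finset.range n, (c^j-u)^2/D^2 :=
            Fin.sum_univ_eq_sum_range (fun j => (c^j-u)^2/D^2) n
        _ = (∑ j ∈ Finset.range n, (c^j - u)^2)/D^2 := by rw [← Finset.sum_div]
    rw [hg0, hsq, div_pow]
    have hD2 : (0:ℝ) < D^2 := by positivity
    have hP0 : 0 ≤ ∑ j ∈ Finset.range n, (c^j - u)^2 :=
      Finset.sum_nonneg fun j _ => sq_nonneg _
    have hrw : (3+3*α)*((1/(n:ℝ))*((∑ j ∈ Finset.range n, (c^j - u)^2)/D^2))
        = ((3+3*α)*(∑ j ∈ Finset.range n, (c^j - u)^2)/(n:ℝ))/D^2 := by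
      ring
    rw [hrw]
    apply (div_le_div_iff_of_pos_right hD2).mpr
    rw [le_div_iff₀ hn0]
    nlinarith [hMain]
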